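/- arXiv:1305.2605 — 4 statements merged into one kernel-verified Lean document; each statement's English description precedes it below -/
import Mathlib

section
/- Let P₀ be a rank-one orthogonal projection on a Hilbert space H and ψ₀ a unit vector in its range. For any bounded self-adjoint operator f on H, the operator norm of the commutator [P₀, f] satisfies ‖[P₀,f]‖² = ⟨fψ₀, fψ₀⟩ − |⟨ψ₀, fψ₀⟩|², i.e. it equals the variance of f in the vector state ψ₀. -/
open ContinuousLinearMap

/-- For a rank-one orthogonal projection `P₀ = ψ₀⟨ψ₀,·⟩` (with `ψ₀` a unit vector) and a
bounded self-adjoint operator `f` on a complex Hilbert space, the square of the operator norm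
of the commutator `[P₀, f]` equals the variance of `f` in the vector state `ψ₀`. -/
theorem norm_commutator_rank_one_projection_sq_eq_variance
    {H : Type*} [NormedAddCommGroup H] [InnerProductSpace ℂ H] [CompleteSpace H]
    (ψ₀ : H) (hψ₀ : ‖ψ₀‖ = 1)
    (P₀ : H →L[ℂ] H) (hP₀ : ∀ x, P₀ x = (inner ℂ ψ₀ x : ℂ) • ψ₀)
    (f : H →L[ℂ] H) (hf : IsSelfAdjoint f) :
    ‖P₀ ∘L f - f ∘L P₀‖ ^ 2 =
      Complex.re (inner ℂ (f ψ₀) (f ψ₀) : ℂ) - ‖(inner ℂ ψ₀ (f ψ₀) : ℂ)‖ ^ 2 := by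
  set a : ℂ := inner ℂ ψ₀ (f ψ₀) with ha_def
  set g : H := f ψ₀ - a • ψ₀ with hg_def
  have hψψ : (inner ℂ ψ₀ ψ₀ : ℂ) = 1 := by
    rw [inner_self_eq_norm_sq_to_K, hψ₀]; norm_num
  have hadj : ∀ x y : H, (inner ℂ (f x) y : ℂ) = inner ℂ x (f y) := by
    intro x y
    conv_lhs => rw [← hf.adjoint_eq]
    exact ContinuousLinearMap.adjoint_inner_left f y x
  have ha : (starRingEnd ℂ) a = a := by
    rw [ha_def, inner_conj_symm, hadj]
  have hψg : (inner ℂ ψ₀ g : ℂ) = 0 := by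
    simp [hg_def, inner_sub_right, inner_smul_right, hψψ, hψ₀, ha_def]
  have hgψ : (inner ℂ g ψ₀ : ℂ) = 0 := by
    rw [← inner_conj_symm, hψg, map_zero]
  have pyth : ∀ v w : H, (inner ℂ v w : ℂ) = 0 → ‖v + w‖ ^ 2 = ‖v‖ ^ 2 + ‖w‖ ^ 2 := by
    intro v w h
    rw [pow_two, pow_two, pow_two]
    exact norm_add_sq_eq_norm_sq_add_norm_sq_of_inner_eq_zero v w h
  have hfψ : f ψ₀ = a • ψ₀ + g := by rw [hg_def]; abel
  set T := P₀ ∘L f - f ∘L P₀ with hT_def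
  have hT : ∀ x, T x = (inner ℂ g x : ℂ) • ψ₀ - (inner ℂ ψ₀ x : ℂ) • g := by
    intro x
    have h1 : (inner ℂ ψ₀ (f x) : ℂ) = inner ℂ (f ψ₀) x := (hadj ψ₀ x).symm
    have : T x = (inner ℂ ψ₀ (f x) : ℂ) • ψ₀ - (inner ℂ ψ₀ x : ℂ) • f ψ₀ := by
      simp [hT_def, hP₀, map_smul]
    rw [this, h1, hfψ, inner_add_left, inner_smul_left, ha]
    module
  have hgnorm : ‖g‖ ^ 2 = Complex.re (inner ℂ (f ψ₀) (f ψ₀) : ℂ) - ‖a‖ ^ 2 := by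
    have hpy : ‖a • ψ₀ + g‖ ^ 2 = ‖a • ψ₀‖ ^ 2 + ‖g‖ ^ 2 := by
      apply pyth
      rw [inner_smul_left, hψg, mul_zero]
    have h2 : Complex.re (inner ℂ (f ψ₀) (f ψ₀) : ℂ) = ‖f ψ₀‖ ^ 2 := by
      rw [← inner_self_eq_norm_sq (𝕜 := ℂ)]
      simp [RCLike.re_to_complex]
    rw [h2, hfψ, hpy, norm_smul, hψ₀]
    simp
  have hTnorm : ‖T‖ = ‖g‖ := by
    apply le_antisymm
    · apply ContinuousLinearMap.opNorm_le_bound _ (norm_nonneg g)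
      intro x
      set u : ℂ := inner ℂ ψ₀ x with hu_def
      set y : H := x - u • ψ₀ with hy_def
      have hψy : (inner ℂ ψ₀ y : ℂ) = 0 := by
        simp [hy_def, inner_sub_right, inner_smul_right, hψψ, hu_def, hψ₀]
      have hx : x = u • ψ₀ + y := by rw [hy_def]; abel
      have hxsq : ‖x‖ ^ 2 = ‖u‖ ^ 2 + ‖y‖ ^ 2 := by
        rw [hx]
        rw [pyth _ _ (by rw [inner_smul_left, hψy, mul_zero])]
        rw [norm_smul]; simp [hψ₀]
      have hgx : (inner ℂ g x : ℂ) = inner ℂ g y := by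
        rw [hx, inner_add_right, inner_smul_right, hgψ, mul_zero, zero_add]
      have hTx : ‖T x‖ ^ 2 = ‖(inner ℂ g y : ℂ)‖ ^ 2 + ‖u‖ ^ 2 * ‖g‖ ^ 2 := by
        rw [hT x, hgx, sub_eq_add_neg, ← neg_smul]
        rw [pyth _ _ (by rw [inner_smul_left, inner_smul_right, hψg]; simp)]
        rw [norm_smul, norm_smul]
        simp [hψ₀, hu_def]
        ring
      have hCS : ‖(inner ℂ g y : ℂ)‖ ≤ ‖g‖ * ‖y‖ := by
        exact norm_inner_le_norm g y
      have hsq : ‖T x‖ ^ 2 ≤ (‖g‖ * ‖x‖) ^ 2 := by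
        rw [hTx]
        have h1 : ‖(inner ℂ g y : ℂ)‖ ^ 2 ≤ ‖g‖ ^ 2 * ‖y‖ ^ 2 := by
          rw [← mul_pow]
          exact pow_le_pow_left₀ (norm_nonneg _) hCS 2
        calc ‖(inner ℂ g y : ℂ)‖ ^ 2 + ‖u‖ ^ 2 * ‖g‖ ^ 2
            ≤ ‖g‖ ^ 2 * ‖y‖ ^ 2 + ‖u‖ ^ 2 * ‖g‖ ^ 2 := by linarith
          _ = (‖g‖ * ‖x‖) ^ 2 := by rw [mul_pow, hxsq]; ring
      exact (pow_le_pow_iff_left₀ (norm_nonneg _) (by positivity) two_ne_zero).mp hsq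
    · have hTψ : T ψ₀ = -g := by
        rw [hT ψ₀, hgψ, hψψ]; simp
      have := T.le_opNorm ψ₀
      rw [hTψ, hψ₀, mul_one, norm_neg] at this
      exact this
  rw [hTnorm, hgnorm]
end

section
/- On the lattice Z with the Dirac operator D as above, the spectral distance between the pure states δ_m and δ_n equals |m − n|. -/
open ContinuousLinearMap

/-- The basis vector `|n⟩₊`/`|n⟩₋` of `H = l²(ℤ) ⊗ ℂ² = l²(ℤ × Bool)`. -/
noncomputable def latticeBasis (n : ℤ) (s : Bool) : lp (fun _ : ℤ × Bool => ℂ) 2 :=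
  lp.single 2 (n, s) 1



open scoped ENNReal

noncomputable abbrev HS := lp (fun _ : ℤ × Bool => ℂ) 2

noncomputable def evalCLM (j : ℤ × Bool) : HS →L[ℂ] ℂ :=
  LinearMap.mkContinuous
    { toFun := fun f => f j
      map_add' := fun f g => by simp [lp.coeFn_add]
      map_smul' := fun c f => by simp [lp.coeFn_smul] }
    1 (fun f => by show ‖f j‖ ≤ 1 * ‖f‖; simpa using lp.norm_apply_le_norm (by norm_num) f j)

@[simp] lemma evalCLM_apply (j : ℤ × Bool) (f : HS) : evalCLM j f = f j := rfl

lemma coord_formula (T : HS →L[ℂ] HS) (c : ℤ × Bool → ℂ) (e : Equiv.Perm (ℤ × Bool))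
    (hT : ∀ i, T (lp.single 2 i 1) = c i • lp.single 2 (e i) 1) (f : HS) (j : ℤ × Bool) :
    (T f) j = c (e.symm j) * f (e.symm j) := by
  have h2 : HasSum (fun i => T (lp.single 2 i (f i))) (T f) :=
    (lp.hasSum_single (by norm_num) f).mapL T
  have h3 : HasSum (fun i => (T (lp.single 2 i (f i))) j) ((T f) j) :=
    h2.mapL (evalCLM j)
  have hsingle : ∀ i, (lp.single 2 i (f i) : HS) = f i • lp.single 2 i 1 := by
    intro i
    rw [← lp.single_smul]; simp
  have hterm : ∀ i, (T (lp.single 2 i (f i))) j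
      = if i = e.symm j then c i * f i else 0 := by
    intro i
    rw [hsingle i, map_smul, hT i]
    by_cases h : i = e.symm j
    · subst h
      have h1 := lp.single_apply_self (E := fun _ : ℤ × Bool => ℂ) 2 (e ((Equiv.symm e) j)) (1:ℂ)
      simp only [Equiv.apply_symm_apply] at h1
      simp [lp.coeFn_smul, h1, mul_comm]
    · have h' : j ≠ e i := fun hj => h (by simp [hj])
      have h1 := lp.single_apply_ne (E := fun _ : ℤ × Bool => ℂ) 2 (e i) (1:ℂ) h'
      simp [lp.coeFn_smul, h1, h, Pi.single_apply, h']
  have h4 : HasSum (fun i => if i = e.symm j then c i * f i else 0) ((T f) j) :=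
    h3.congr_fun (fun i => (hterm i).symm)
  refine h4.unique ?_
  have := hasSum_ite_eq (e.symm j) (c (e.symm j) * (f (e.symm j) : ℂ))
  refine this.congr_fun (fun i => ?_)
  by_cases h : i = e.symm j <;> simp [h]

lemma opNorm_le_one (T : HS →L[ℂ] HS) (c : ℤ × Bool → ℂ) (e : Equiv.Perm (ℤ × Bool))
    (hT : ∀ i, T (lp.single 2 i 1) = c i • lp.single 2 (e i) 1)
    (hc : ∀ i, ‖c i‖ ≤ 1) : ‖T‖ ≤ 1 := by
  refine T.opNorm_le_bound zero_le_one (fun f => ?_)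
  rw [one_mul]
  have hp : 0 < (2 : ℝ≥0∞).toReal := by norm_num
  have hTf := lp.norm_rpow_eq_tsum hp (T f)
  have hf := lp.norm_rpow_eq_tsum hp f
  have hSf : Summable (fun i => ‖f i‖ ^ (2:ℝ≥0∞).toReal) := (lp.hasSum_norm hp f).summable
  have hSf' : Summable (fun j => ‖f (e.symm j)‖ ^ (2:ℝ≥0∞).toReal) :=
    (Equiv.summable_iff e.symm).2 hSf
  have hSTf : Summable (fun j => ‖(T f) j‖ ^ (2:ℝ≥0∞).toReal) :=
    (lp.hasSum_norm hp (T f)).summable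
  have hpt : ∀ j, ‖(T f) j‖ ^ (2:ℝ≥0∞).toReal ≤ ‖f (e.symm j)‖ ^ (2:ℝ≥0∞).toReal := by
    intro j
    have h1 : ‖(T f) j‖ ≤ ‖f (e.symm j)‖ := by
      rw [coord_formula T c e hT f j, norm_mul]
      calc ‖c (e.symm j)‖ * ‖(f (e.symm j) : ℂ)‖
          ≤ 1 * ‖(f (e.symm j) : ℂ)‖ := by
            exact mul_le_mul_of_nonneg_right (hc _) (norm_nonneg _)
        _ = ‖(f (e.symm j) : ℂ)‖ := one_mul _
    exact Real.rpow_le_rpow (norm_nonneg _) h1 (le_of_lt hp)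
  have hmain : ‖T f‖ ^ (2:ℝ≥0∞).toReal ≤ ‖f‖ ^ (2:ℝ≥0∞).toReal := by
    rw [hTf, hf]
    calc (∑' j, ‖(T f) j‖ ^ (2:ℝ≥0∞).toReal)
        ≤ ∑' j, ‖f (e.symm j)‖ ^ (2:ℝ≥0∞).toReal := Summable.tsum_le_tsum hpt hSTf hSf'
      _ = ∑' i, ‖f i‖ ^ (2:ℝ≥0∞).toReal := e.symm.tsum_eq (fun i => ‖f i‖ ^ (2:ℝ≥0∞).toReal)
  have h2 : (2:ℝ≥0∞).toReal = (2:ℝ) := by norm_num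
  rw [h2] at hmain
  have hm2 : ‖T f‖ ^ (2:ℕ) ≤ ‖f‖ ^ (2:ℕ) := by
    rw [← Real.rpow_natCast, ← Real.rpow_natCast]
    exact_mod_cast hmain
  exact (pow_le_pow_iff_left₀ (norm_nonneg _) (norm_nonneg _) two_ne_zero).1 hm2

lemma step_telescope {a : ℤ → ℝ} (h : ∀ k : ℤ, |a (k + 1) - a k| ≤ 1) (m n : ℤ) :
    |a m - a n| ≤ |(m : ℝ) - n| := by
  have key : ∀ d : ℕ, ∀ p : ℤ, |a (p + d) - a p| ≤ d := by
    intro d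
    induction d with
    | zero => intro p; simp
    | succ d ih =>
      intro p
      have h1 := h (p + d)
      have h2 := ih p
      have : |a (p + (d + 1 : ℕ)) - a p| ≤ |a (p + d + 1) - a (p + d)| + |a (p + d) - a p| := by
        have : (p + (d + 1 : ℕ) : ℤ) = p + d + 1 := by push_cast; ring
        rw [this]
        exact (abs_sub_le _ _ _)
      push_cast at h2 this ⊢
      linarith
  rcases le_total n m with hnm | hmn
  · have hd : m = n + ((m - n).toNat : ℤ) := by
      rw [Int.toNat_of_nonneg (sub_nonneg.2 hnm)]; ring
    have := key (m - n).toNat n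
    rw [← hd] at this
    calc |a m - a n| ≤ ((m - n).toNat : ℝ) := this
      _ = ((m : ℝ) - n) := by
        rw [← Int.cast_natCast, Int.toNat_of_nonneg (sub_nonneg.2 hnm)]; push_cast; ring
      _ ≤ |(m : ℝ) - n| := le_abs_self _
  · have hd : n = m + ((n - m).toNat : ℤ) := by
      rw [Int.toNat_of_nonneg (sub_nonneg.2 hmn)]; ring
    have := key (n - m).toNat m
    rw [← hd] at this
    rw [abs_sub_comm]
    calc |a n - a m| ≤ ((n - m).toNat : ℝ) := this
      _ = ((n : ℝ) - m) := by
        rw [← Int.cast_natCast, Int.toNat_of_nonneg (sub_nonneg.2 hmn)]; push_cast; ring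
      _ ≤ |(m : ℝ) - n| := by rw [abs_sub_comm]; exact le_abs_self _

noncomputable def shiftPerm : Equiv.Perm (ℤ × Bool) :=
  Function.Involutive.toPerm (fun p => if p.2 then (p.1 + 1, false) else (p.1 - 1, true))
    (by rintro ⟨k, b⟩; cases b <;> simp)

@[simp] lemma shiftPerm_true (k : ℤ) : shiftPerm (k, true) = (k + 1, false) := rfl
@[simp] lemma shiftPerm_false (k : ℤ) : shiftPerm (k, false) = (k - 1, true) := rfl
@[simp] lemma shiftPerm_symm_true (k : ℤ) : shiftPerm.symm (k, true) = (k + 1, false) := rfl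
@[simp] lemma shiftPerm_symm_false (k : ℤ) : shiftPerm.symm (k, false) = (k - 1, true) := rfl

lemma norm_latticeBasis' (i : ℤ × Bool) : ‖(lp.single 2 i (1 : ℂ) : HS)‖ = 1 := by
  simpa using lp.norm_single (p := 2) (by norm_num) (fun _ : ℤ × Bool => (1 : ℂ)) i

/-- On the lattice `ℤ` with the Dirac operator `D|n⟩₊ = |n+1⟩₋`, `D|n⟩₋ = |n-1⟩₊`, the
spectral distance between the pure states `δ_m` and `δ_n` equals `|m - n|`.  Here `A a` is
the diagonal (multiplication) operator associated to a real function `a ∈ C₀(ℤ)`, and the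
spectral distance is the supremum of `a_m - a_n` over self-adjoint `a ∈ C₀(ℤ)` with
`‖[D, a]‖ ≤ 1`. -/
theorem lattice_spectral_distance_pure_states
    (D : lp (fun _ : ℤ × Bool => ℂ) 2 →L[ℂ] lp (fun _ : ℤ × Bool => ℂ) 2)
    (hD₁ : ∀ n : ℤ, D (latticeBasis n true) = latticeBasis (n + 1) false)
    (hD₂ : ∀ n : ℤ, D (latticeBasis n false) = latticeBasis (n - 1) true)
    (A : (ℤ → ℝ) → (lp (fun _ : ℤ × Bool => ℂ) 2 →L[ℂ] lp (fun _ : ℤ × Bool => ℂ) 2))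
    (hA : ∀ a : ℤ → ℝ, Filter.Tendsto a Filter.cofinite (nhds 0) →
      ∀ (n : ℤ) (s : Bool), A a (latticeBasis n s) = (a n : ℂ) • latticeBasis n s)
    (m n : ℤ) :
    sSup {r : ℝ | ∃ a : ℤ → ℝ, Filter.Tendsto a Filter.cofinite (nhds 0) ∧
        ‖D ∘L A a - A a ∘L D‖ ≤ 1 ∧ r = a m - a n} = |(m : ℝ) - (n : ℝ)| := by
  set S : Set ℝ := {r : ℝ | ∃ a : ℤ → ℝ, Filter.Tendsto a Filter.cofinite (nhds 0) ∧
      ‖D ∘L A a - A a ∘L D‖ ≤ 1 ∧ r = a m - a n} with hS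
  -- Upper bound
  have hub : ∀ r ∈ S, r ≤ |(m : ℝ) - n| := by
    rintro r ⟨a, ha, hnorm, rfl⟩
    have hstep : ∀ k : ℤ, |a (k + 1) - a k| ≤ 1 := by
      intro k
      have hC : (D ∘L A a - A a ∘L D) (latticeBasis k true)
          = ((a k - a (k + 1) : ℝ) : ℂ) • latticeBasis (k + 1) false := by
        rw [ContinuousLinearMap.sub_apply, ContinuousLinearMap.comp_apply,
          ContinuousLinearMap.comp_apply, hA a ha k true, map_smul, hD₁ k,
          hA a ha (k + 1) false, Complex.ofReal_sub, sub_smul]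
      have hle : ‖(D ∘L A a - A a ∘L D) (latticeBasis k true)‖ ≤ 1 := by
        calc ‖(D ∘L A a - A a ∘L D) (latticeBasis k true)‖
            ≤ ‖D ∘L A a - A a ∘L D‖ * ‖latticeBasis k true‖ := le_opNorm _ _
          _ ≤ 1 * 1 := by
              refine mul_le_mul hnorm ?_ (norm_nonneg _) zero_le_one
              exact le_of_eq (norm_latticeBasis' (k, true))
          _ = 1 := one_mul 1
      rw [hC, norm_smul] at hle
      have hb : ‖latticeBasis (k + 1) false‖ = 1 := norm_latticeBasis' (k + 1, false)
      rw [hb, mul_one, Complex.norm_real, Real.norm_eq_abs] at hle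
      rwa [abs_sub_comm] at hle
    calc a m - a n ≤ |a m - a n| := le_abs_self _
      _ ≤ |(m : ℝ) - n| := step_telescope hstep m n
  -- The optimal function
  set a : ℤ → ℝ := fun k => max (|(m : ℝ) - n| - |(k : ℝ) - m|) 0 with haa
  have ham : a m = |(m : ℝ) - n| := by
    simp [haa, abs_nonneg]
  have han : a n = 0 := by
    simp [haa, abs_sub_comm (n : ℝ) m]
  have hstep : ∀ k : ℤ, |a (k + 1) - a k| ≤ 1 := by
    intro k
    have h1 : |a (k + 1) - a k| ≤
        |(|(m : ℝ) - n| - |((k + 1 : ℤ) : ℝ) - m|) - (|(m : ℝ) - n| - |(k : ℝ) - m|)| :=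
      abs_max_sub_max_le_abs _ _ _
    have h2 : (|(m : ℝ) - n| - |((k + 1 : ℤ) : ℝ) - m|) - (|(m : ℝ) - n| - |(k : ℝ) - m|)
        = |(k : ℝ) - m| - |((k : ℝ) + 1) - m| := by push_cast; ring
    have h3 : |(|(k : ℝ) - m| - |((k : ℝ) + 1) - m|)| ≤ |((k : ℝ) - m) - (((k : ℝ) + 1) - m)| :=
      abs_abs_sub_abs_le_abs_sub _ _
    have h4 : |((k : ℝ) - m) - (((k : ℝ) + 1) - m)| = 1 := by
      rw [show ((k : ℝ) - m) - (((k : ℝ) + 1) - m) = -1 by ring]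
      simp
    calc |a (k + 1) - a k| ≤ _ := h1
      _ = |(|(k : ℝ) - m| - |((k : ℝ) + 1) - m|)| := by rw [h2]
      _ ≤ |((k : ℝ) - m) - (((k : ℝ) + 1) - m)| := h3
      _ = 1 := h4
  have htend : Filter.Tendsto a Filter.cofinite (nhds 0) := by
    have hfin : {k : ℤ | a k ≠ 0}.Finite := by
      refine (Set.finite_Icc (m - |m - n|) (m + |m - n|)).subset ?_
      intro k hk
      have hpos : 0 < |(m : ℝ) - n| - |(k : ℝ) - m| := by
        by_contra hle
        exact hk (max_eq_right (not_lt.1 hle) ▸ rfl)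
      have hlt : |(k : ℝ) - m| < |(m : ℝ) - n| := by linarith
      have hlt' : |k - m| < |m - n| := by
        have : ((|k - m| : ℤ) : ℝ) < ((|m - n| : ℤ) : ℝ) := by push_cast; exact hlt
        exact_mod_cast this
      have := abs_lt.1 hlt'
      constructor <;> [linarith [this.1]; linarith [this.2]]
    refine Filter.Tendsto.congr' ?_
      (tendsto_const_nhds : Filter.Tendsto (fun _ : ℤ => (0 : ℝ)) Filter.cofinite (nhds 0))
    exact (hfin.eventually_cofinite_notMem).mono fun k hk => by
      simpa using (not_not.1 hk).symm
  have hcomm : ‖D ∘L A a - A a ∘L D‖ ≤ 1 := by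
    refine opNorm_le_one (D ∘L A a - A a ∘L D)
      (fun p => if p.2 then ((a p.1 - a (p.1 + 1) : ℝ) : ℂ) else ((a p.1 - a (p.1 - 1) : ℝ) : ℂ))
      shiftPerm ?_ ?_
    · rintro ⟨k, b⟩
      cases b
      · show (D ∘L A a - A a ∘L D) (latticeBasis k false) = _ • (lp.single 2 (k - 1, true) 1 : HS)
        rw [ContinuousLinearMap.sub_apply, ContinuousLinearMap.comp_apply,
          ContinuousLinearMap.comp_apply, hA a htend k false, map_smul, hD₂ k,
          hA a htend (k - 1) true]
        show _ = ((a k - a (k - 1) : ℝ) : ℂ) • latticeBasis (k - 1) true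
        rw [Complex.ofReal_sub, sub_smul]
      · show (D ∘L A a - A a ∘L D) (latticeBasis k true) = _ • (lp.single 2 (k + 1, false) 1 : HS)
        rw [ContinuousLinearMap.sub_apply, ContinuousLinearMap.comp_apply,
          ContinuousLinearMap.comp_apply, hA a htend k true, map_smul, hD₁ k,
          hA a htend (k + 1) false]
        show _ = ((a k - a (k + 1) : ℝ) : ℂ) • latticeBasis (k + 1) false
        rw [Complex.ofReal_sub, sub_smul]
    · rintro ⟨k, b⟩
      cases b
      · show ‖((a k - a (k - 1) : ℝ) : ℂ)‖ ≤ 1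
        rw [Complex.norm_real, Real.norm_eq_abs]
        have := hstep (k - 1)
        rwa [sub_add_cancel] at this
      · show ‖((a k - a (k + 1) : ℝ) : ℂ)‖ ≤ 1
        rw [Complex.norm_real, Real.norm_eq_abs, abs_sub_comm]
        exact hstep k
  have hmem : |(m : ℝ) - n| ∈ S := ⟨a, htend, hcomm, by rw [ham, han, sub_zero]⟩
  exact le_antisymm (Real.sSup_le hub (abs_nonneg _)) (le_csSup ⟨_, hub⟩ hmem)
end

section
/- On the lattice Z with the Dirac operator D as above, for any state φ on C₀(Z) given by a probability distribution (p_k)_{k∈Z} and any n ∈ Z, the spectral distance from φ to δ_n equals Σ_{k∈Z} |k−n| p_k (possibly infinite). -/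
set_option maxHeartbeats 1000000

open ContinuousLinearMap

/-- A bounded operator permuting the basis vectors of `ℓ²` and multiplying them by scalars of
norm at most one has operator norm at most one. -/
lemma opNorm_le_one_of_shift_mul {ι : Type*} [DecidableEq ι]
    (T : lp (fun _ : ι => ℂ) 2 →L[ℂ] lp (fun _ : ι => ℂ) 2)
    (σ : ι ≃ ι) (c : ι → ℂ) (hc : ∀ i, ‖c i‖ ≤ 1)
    (hT : ∀ i, T (lp.single 2 i 1) = c i • lp.single 2 (σ i) 1) : ‖T‖ ≤ 1 := by
  refine T.opNorm_le_bound zero_le_one fun x => ?_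
  rw [one_mul]
  set y : ι → ℂ := fun j => c (σ.symm j) * x (σ.symm j) with hydef
  have hxs : Summable (fun i => ‖x i‖ ^ (2 : ENNReal).toReal) :=
    (lp.memℓp x).summable (by norm_num)
  have h1 : Summable (fun j : ι => ‖x (σ.symm j)‖ ^ (2 : ENNReal).toReal) :=
    (Equiv.summable_iff σ.symm).2 hxs
  have hys : Summable (fun j : ι => ‖y j‖ ^ (2 : ENNReal).toReal) := by
    refine h1.of_nonneg_of_le (fun j => Real.rpow_nonneg (norm_nonneg _) _) fun j => ?_
    refine Real.rpow_le_rpow (norm_nonneg _) ?_ (by norm_num)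
    calc ‖y j‖ = ‖c (σ.symm j)‖ * ‖x (σ.symm j)‖ := norm_mul _ _
      _ ≤ 1 * ‖x (σ.symm j)‖ := by
          exact mul_le_mul_of_nonneg_right (hc _) (norm_nonneg _)
      _ = ‖x (σ.symm j)‖ := one_mul _
  have hym : Memℓp y 2 := memℓp_gen hys
  have hx1 : HasSum (fun i => lp.single 2 i (x i)) x := lp.hasSum_single (by norm_num) x
  have hT1 : HasSum (fun i => T (lp.single 2 i (x i))) (T x) := T.hasSum hx1
  have hTi : ∀ i, T (lp.single 2 i (x i)) = lp.single 2 (σ i) (y (σ i)) := by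
    intro i
    have h2 : lp.single (E := fun _ : ι => ℂ) 2 i (x i)
        = (x i) • lp.single (E := fun _ : ι => ℂ) 2 i (1 : ℂ) := by
      rw [← lp.single_smul]
      norm_num
    rw [h2, map_smul, hT, smul_smul, ← lp.single_smul]
    congr 1
    simp [hydef, smul_eq_mul, mul_comm]
  have h3 : HasSum (fun j => lp.single 2 j (y j)) (T x) := by
    refine (Equiv.hasSum_iff σ).1 ?_
    have : (fun j => lp.single (E := fun _ : ι => ℂ) 2 j (y j)) ∘ σ
        = fun i => lp.single 2 (σ i) (y (σ i)) := rfl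
    rw [this]
    simp_rw [← hTi]
    exact hT1
  have h4 : HasSum (fun j => lp.single 2 j (y j)) (⟨y, hym⟩ : lp (fun _ : ι => ℂ) 2) :=
    lp.hasSum_single (by norm_num) _
  have hxy : T x = ⟨y, hym⟩ := h3.unique h4
  rw [hxy]
  refine lp.norm_le_of_tsum_le (by norm_num) (norm_nonneg _) ?_
  rw [lp.norm_rpow_eq_tsum (by norm_num) x]
  calc ∑' j, ‖(⟨y, hym⟩ : lp (fun _ : ι => ℂ) 2) j‖ ^ (2 : ENNReal).toReal
      = ∑' j, ‖y j‖ ^ (2 : ENNReal).toReal := rfl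
    _ ≤ ∑' j, ‖x (σ.symm j)‖ ^ (2 : ENNReal).toReal := by
        refine Summable.tsum_le_tsum (fun j => ?_) hys h1
        refine Real.rpow_le_rpow (norm_nonneg _) ?_ (by norm_num)
        calc ‖y j‖ = ‖c (σ.symm j)‖ * ‖x (σ.symm j)‖ := norm_mul _ _
          _ ≤ 1 * ‖x (σ.symm j)‖ := mul_le_mul_of_nonneg_right (hc _) (norm_nonneg _)
          _ = ‖x (σ.symm j)‖ := one_mul _
    _ = ∑' i, ‖x i‖ ^ (2 : ENNReal).toReal :=
        Equiv.tsum_eq σ.symm (fun i => ‖x i‖ ^ (2 : ENNReal).toReal)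

/-- A function on `ℤ` with unit steps is `1`-Lipschitz. -/
lemma abs_sub_le_of_step {a : ℤ → ℝ} (h : ∀ k, |a (k + 1) - a k| ≤ 1) (k m : ℤ) :
    |a k - a m| ≤ |(k : ℝ) - (m : ℝ)| := by
  have key : ∀ d : ℕ, ∀ m : ℤ, |a (m + d) - a m| ≤ d := by
    intro d
    induction d with
    | zero => simp
    | succ d ih =>
      intro m
      have h1 := h (m + d)
      have h2 := ih m
      have heq : (m : ℤ) + ((d : ℕ) + 1 : ℕ) = (m + d) + 1 := by push_cast; ring
      rw [heq]
      have h3 : |a (m + d + 1) - a m| ≤ |a (m + d + 1) - a (m + d)| + |a (m + d) - a m| :=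
        abs_sub_le _ _ _
      push_cast
      linarith
  rcases le_total m k with hmk | hkm
  · obtain ⟨d, rfl⟩ : ∃ d : ℕ, k = m + d := ⟨(k - m).toNat, by omega⟩
    have : |((m + d : ℤ) : ℝ) - (m : ℝ)| = (d : ℝ) := by
      push_cast; simp [abs_of_nonneg]
    rw [this]
    exact key d m
  · obtain ⟨d, rfl⟩ : ∃ d : ℕ, m = k + d := ⟨(m - k).toNat, by omega⟩
    have : |(k : ℝ) - ((k + d : ℤ) : ℝ)| = (d : ℝ) := by
      push_cast; rw [abs_sub_comm]; simp [abs_of_nonneg]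
    rw [this, abs_sub_comm]
    exact key d k

/-- On the lattice `ℤ` with the Dirac operator `D|n⟩₊ = |n+1⟩₋`, `D|n⟩₋ = |n-1⟩₊`, for any
state `φ` on `C₀(ℤ)` given by a probability distribution `(p_k)` and any `n ∈ ℤ`, the
spectral distance between `φ` and the pure state `δ_n` equals `Σ_k |k - n| p_k`
(possibly infinite, hence computed in `ℝ≥0∞`). -/
theorem lattice_spectral_distance_to_pure_state
    (D : lp (fun _ : ℤ × Bool => ℂ) 2 →L[ℂ] lp (fun _ : ℤ × Bool => ℂ) 2)
    (hD₁ : ∀ n : ℤ, D (latticeBasis n true) = latticeBasis (n + 1) false)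
    (hD₂ : ∀ n : ℤ, D (latticeBasis n false) = latticeBasis (n - 1) true)
    (A : (ℤ → ℝ) → (lp (fun _ : ℤ × Bool => ℂ) 2 →L[ℂ] lp (fun _ : ℤ × Bool => ℂ) 2))
    (hA : ∀ a : ℤ → ℝ, Filter.Tendsto a Filter.cofinite (nhds 0) →
      ∀ (k : ℤ) (s : Bool), A a (latticeBasis k s) = (a k : ℂ) • latticeBasis k s)
    (p : ℤ → ℝ) (hp0 : ∀ k, 0 ≤ p k) (hp1 : (∑' k, p k) = 1)
    (n : ℤ) :
    (⨆ (a : ℤ → ℝ) (_ : Filter.Tendsto a Filter.cofinite (nhds 0))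
        (_ : ‖D ∘L A a - A a ∘L D‖ ≤ 1),
      ENNReal.ofReal ((∑' k, a k * p k) - a n)) =
    ∑' k : ℤ, ENNReal.ofReal (|(k : ℝ) - (n : ℝ)| * p k) := by
  have hnb : ∀ (k : ℤ) (s : Bool), ‖latticeBasis k s‖ = 1 := by
    intro k s
    have := lp.norm_single (p := 2) (E := fun _ : ℤ × Bool => ℂ) (by norm_num) (k, s) (1 : ℂ)
    simpa [latticeBasis] using this
  have hTbasis₁ : ∀ (a : ℤ → ℝ), Filter.Tendsto a Filter.cofinite (nhds 0) → ∀ k : ℤ,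
      (D ∘L A a - A a ∘L D) (latticeBasis k true)
        = ((a k - a (k + 1) : ℝ) : ℂ) • latticeBasis (k + 1) false := by
    intro a ha k
    rw [ContinuousLinearMap.sub_apply, ContinuousLinearMap.comp_apply,
      ContinuousLinearMap.comp_apply, hA a ha, map_smul, hD₁, hA a ha]
    push_cast
    rw [sub_smul]
  have hTbasis₂ : ∀ (a : ℤ → ℝ), Filter.Tendsto a Filter.cofinite (nhds 0) → ∀ k : ℤ,
      (D ∘L A a - A a ∘L D) (latticeBasis k false)
        = ((a k - a (k - 1) : ℝ) : ℂ) • latticeBasis (k - 1) true := by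
    intro a ha k
    rw [ContinuousLinearMap.sub_apply, ContinuousLinearMap.comp_apply,
      ContinuousLinearMap.comp_apply, hA a ha, map_smul, hD₂, hA a ha]
    push_cast
    rw [sub_smul]
  refine le_antisymm ?_ ?_
  · -- upper bound
    refine iSup_le fun a => iSup_le fun ha => iSup_le fun hnorm => ?_
    have hstep : ∀ k : ℤ, |a (k + 1) - a k| ≤ 1 := by
      intro k
      have h1 := (D ∘L A a - A a ∘L D).le_opNorm (latticeBasis k true)
      rw [hTbasis₁ a ha k, norm_smul, hnb (k + 1) false, hnb k true, mul_one, mul_one] at h1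
      have h2 : ‖((a k - a (k + 1) : ℝ) : ℂ)‖ = |a k - a (k + 1)| := by
        rw [Complex.norm_real, Real.norm_eq_abs]
      rw [h2] at h1
      rw [abs_sub_comm]
      linarith
    have hlip : ∀ k, |a k - a n| ≤ |(k : ℝ) - (n : ℝ)| := fun k => abs_sub_le_of_step hstep k n
    have hbd : ∃ M : ℝ, ∀ k, |a k| ≤ M := by
      have hev : ∀ᶠ k in Filter.cofinite, |a k| < 1 := by
        have := Metric.tendsto_nhds.mp ha 1 one_pos
        simpa [Real.dist_eq] using this
      rw [Filter.eventually_cofinite] at hev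
      refine ⟨1 + ∑ k ∈ hev.toFinset, |a k|, fun k => ?_⟩
      by_cases hk : |a k| < 1
      · have : (0 : ℝ) ≤ ∑ k ∈ hev.toFinset, |a k| :=
          Finset.sum_nonneg fun _ _ => abs_nonneg _
        linarith
      · have hk' : k ∈ hev.toFinset := hev.mem_toFinset.2 (by simpa using hk)
        have := Finset.single_le_sum (f := fun k => |a k|) (fun _ _ => abs_nonneg _) hk'
        linarith
    obtain ⟨M, hM⟩ := hbd
    have hps : Summable p := by
      by_contra hcon
      rw [tsum_eq_zero_of_not_summable hcon] at hp1
      norm_num at hp1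
    have hsap : Summable (fun k => a k * p k) := by
      refine Summable.of_norm_bounded (hps.mul_left M) fun k => ?_
      rw [Real.norm_eq_abs, abs_mul, abs_of_nonneg (hp0 k)]
      exact mul_le_mul_of_nonneg_right (hM k) (hp0 k)
    have hsd : Summable (fun k => (a k - a n) * p k) := by
      refine Summable.of_norm_bounded (hps.mul_left (M + M)) fun k => ?_
      rw [Real.norm_eq_abs, abs_mul, abs_of_nonneg (hp0 k)]
      refine mul_le_mul_of_nonneg_right ?_ (hp0 k)
      have h3 := abs_sub (a k) (a n)
      have := hM k
      have := hM n
      linarith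
    have heq : (∑' k, a k * p k) - a n = ∑' k, (a k - a n) * p k := by
      have h4 : (fun k => (a k - a n) * p k) = fun k => a k * p k - a n * p k := by
        funext k; ring
      rw [h4, Summable.tsum_sub hsap (hps.mul_left (a n)), tsum_mul_left, hp1, mul_one]
    rw [heq]
    calc ENNReal.ofReal (∑' k, (a k - a n) * p k)
        ≤ ENNReal.ofReal (∑' k, |(a k - a n) * p k|) :=
          ENNReal.ofReal_le_ofReal (Summable.tsum_le_tsum (fun k => le_abs_self _) hsd hsd.abs)
      _ = ∑' k : ℤ, ENNReal.ofReal |(a k - a n) * p k| :=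
          ENNReal.ofReal_tsum_of_nonneg (fun k => abs_nonneg _) hsd.abs
      _ ≤ ∑' k : ℤ, ENNReal.ofReal (|(k : ℝ) - (n : ℝ)| * p k) := by
          refine ENNReal.tsum_le_tsum fun k => ENNReal.ofReal_le_ofReal ?_
          rw [abs_mul, abs_of_nonneg (hp0 k)]
          exact mul_le_mul_of_nonneg_right (hlip k) (hp0 k)
  · -- lower bound
    rw [ENNReal.tsum_eq_iSup_sum]
    refine iSup_le fun s => ?_
    set m : ℕ := s.sup fun k => (k - n).natAbs with hm
    set a : ℤ → ℝ :=
      fun k => max 0 (min |(k : ℝ) - (n : ℝ)| (2 * (m : ℝ) - |(k : ℝ) - (n : ℝ)|)) with hadef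
    have habs : ∀ k : ℤ, |(k : ℝ) - (n : ℝ)| = (((k - n).natAbs : ℕ) : ℝ) := by
      intro k
      rw [Nat.cast_natAbs]
      push_cast
      ring_nf
    have hsb : ∀ k ∈ s, |(k : ℝ) - (n : ℝ)| ≤ (m : ℝ) := by
      intro k hk
      rw [habs]
      exact_mod_cast Nat.cast_le.mpr (Finset.le_sup (f := fun k => (k - n).natAbs) hk)
    have hval : ∀ k ∈ s, a k = |(k : ℝ) - (n : ℝ)| := by
      intro k hk
      have h1 := hsb k hk
      have h2 : |(k : ℝ) - (n : ℝ)| ≤ 2 * (m : ℝ) - |(k : ℝ) - (n : ℝ)| := by linarith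
      simp only [hadef]
      rw [min_eq_left h2, max_eq_right (abs_nonneg _)]
    have hnn : ∀ k, 0 ≤ a k := fun k => le_max_left _ _
    have han : a n = 0 := by
      simp only [hadef]
      rw [sub_self, abs_zero]
      have h5 : min (0 : ℝ) (2 * (m : ℝ) - 0) = 0 := min_eq_left (by rw [sub_zero]; positivity)
      rw [h5, max_self]
    have hsupfin : {k : ℤ | a k ≠ 0}.Finite := by
      refine Set.Finite.subset (Set.finite_Icc (n - 2 * (m : ℤ)) (n + 2 * (m : ℤ))) ?_
      intro k hk
      simp only [Set.mem_setOf_eq] at hk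
      by_contra hmem
      apply hk
      have h6 : 2 * (m : ℕ) ≤ (k - n).natAbs := by
        simp only [Set.mem_Icc, not_and_or, not_le] at hmem
        omega
      have h7 : 2 * (m : ℝ) ≤ |(k : ℝ) - (n : ℝ)| := by
        rw [habs]
        exact_mod_cast Nat.cast_le.mpr h6
      simp only [hadef]
      rw [max_eq_left (min_le_of_right_le (by linarith))]
    have htend : Filter.Tendsto a Filter.cofinite (nhds 0) := by
      have h0 : (fun _ : ℤ => (0 : ℝ)) =ᶠ[Filter.cofinite] a := by
        refine Filter.eventually_cofinite.mpr (hsupfin.subset fun k hk => ?_)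
        simp only [Set.mem_setOf_eq] at hk ⊢
        exact fun h => hk h.symm
      exact Filter.Tendsto.congr' h0 tendsto_const_nhds
    have hstep : ∀ k : ℤ, |a (k + 1) - a k| ≤ 1 := by
      intro k
      simp only [hadef]
      set u : ℝ := |(k : ℝ) - (n : ℝ)| with hudef
      set u' : ℝ := |((k + 1 : ℤ) : ℝ) - (n : ℝ)| with hudef'
      have hu : |u' - u| ≤ 1 := by
        have h1 : (((k + 1 : ℤ) : ℝ) - (n : ℝ)) - ((k : ℝ) - (n : ℝ)) = 1 := by
          push_cast; ring
        calc |u' - u|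
            ≤ |(((k + 1 : ℤ) : ℝ) - (n : ℝ)) - ((k : ℝ) - (n : ℝ))| := by
              rw [hudef', hudef]
              exact abs_abs_sub_abs_le_abs_sub _ _
          _ = 1 := by rw [h1]; norm_num
      have h8 : (2 * (m : ℝ) - u') - (2 * (m : ℝ) - u) = u - u' := by ring
      calc |max 0 (min u' (2 * (m : ℝ) - u')) - max 0 (min u (2 * (m : ℝ) - u))|
          ≤ max |(0 : ℝ) - 0| |min u' (2 * (m : ℝ) - u') - min u (2 * (m : ℝ) - u)| :=
            abs_max_sub_max_le_max _ _ _ _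
        _ ≤ max |(0 : ℝ) - 0| (max |u' - u| |(2 * (m : ℝ) - u') - (2 * (m : ℝ) - u)|) :=
            max_le_max le_rfl (abs_min_sub_min_le_max _ _ _ _)
        _ ≤ 1 := by
            refine max_le (by norm_num) (max_le hu ?_)
            rw [h8, abs_sub_comm]
            exact hu
    -- the commutator norm bound
    set σ : ℤ × Bool ≃ ℤ × Bool :=
      { toFun := fun i => (if i.2 then i.1 + 1 else i.1 - 1, !i.2)
        invFun := fun i => (if i.2 then i.1 + 1 else i.1 - 1, !i.2)
        left_inv := by rintro ⟨k, s⟩; cases s <;> simp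
        right_inv := by rintro ⟨k, s⟩; cases s <;> simp } with hσ
    set c : ℤ × Bool → ℂ := fun i =>
      if i.2 then ((a i.1 - a (i.1 + 1) : ℝ) : ℂ) else ((a i.1 - a (i.1 - 1) : ℝ) : ℂ) with hc
    have hc1 : ∀ i, ‖c i‖ ≤ 1 := by
      rintro ⟨k, s⟩
      cases s
      · simp only [hc, Bool.false_eq_true, if_false]
        rw [Complex.norm_real, Real.norm_eq_abs]
        have := hstep (k - 1)
        rw [sub_add_cancel] at this
        exact this
      · simp only [hc, if_true]
        rw [Complex.norm_real, Real.norm_eq_abs, abs_sub_comm]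
        exact hstep k
    have hTσ : ∀ i, (D ∘L A a - A a ∘L D) (lp.single 2 i 1)
        = c i • lp.single 2 (σ i) 1 := by
      rintro ⟨k, s⟩
      cases s
      · have h9 := hTbasis₂ a htend k
        simp only [hc, hσ, Bool.false_eq_true, if_false, Equiv.coe_fn_mk, Bool.not_false]
        exact h9
      · have h9 := hTbasis₁ a htend k
        simp only [hc, hσ, if_true, Equiv.coe_fn_mk, Bool.not_true]
        exact h9
    have hTa : ‖D ∘L A a - A a ∘L D‖ ≤ 1 :=
      opNorm_le_one_of_shift_mul _ σ c hc1 hTσ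
    have hsfin : Summable (fun k => a k * p k) := by
      refine summable_of_finite_support (hsupfin.subset fun k hk => ?_)
      simp only [Function.mem_support] at hk
      simp only [Set.mem_setOf_eq]
      intro h0
      exact hk (by rw [h0, zero_mul])
    refine le_trans ?_ (le_iSup_of_le a (le_iSup_of_le htend (le_iSup_of_le hTa le_rfl)))
    rw [han, sub_zero]
    calc ∑ k ∈ s, ENNReal.ofReal (|(k : ℝ) - (n : ℝ)| * p k)
        = ENNReal.ofReal (∑ k ∈ s, |(k : ℝ) - (n : ℝ)| * p k) :=
          (ENNReal.ofReal_sum_of_nonneg fun k _ => mul_nonneg (abs_nonneg _) (hp0 k)).symm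
      _ ≤ ENNReal.ofReal (∑' k, a k * p k) := by
          refine ENNReal.ofReal_le_ofReal ?_
          have h10 : ∑ k ∈ s, |(k : ℝ) - (n : ℝ)| * p k = ∑ k ∈ s, a k * p k :=
            Finset.sum_congr rfl fun k hk => by rw [hval k hk]
          rw [h10]
          exact Summable.sum_le_tsum s (fun k _ => mul_nonneg (hnn k) (hp0 k)) hsfin
end

section
/- Let D be self-adjoint on H, P a spectral projection of D (so [D,P] = 0), D_P := PDP, and ψ₀ ∈ PH a unit vector. Define ψ_t := e^{itD}ψ₀ and the vector states Ψ_t(a) = ⟨ψ_t, a ψ_t⟩ for bounded a. Then for all t₁, t₂ and all a ∈ B(H), |Ψ_{t₁}(a) − Ψ_{t₂}(a)| ≤ ‖[D_P, a]‖ · |t₁ − t₂|. Consequently the spectral distance associated to D_P between Ψ_{t₁} and Ψ_{t₂} is at most |t₁ − t₂|. -/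
open ContinuousLinearMap

/-- The orbit `ψ_t = e^{itD} ψ₀` of a vector `ψ₀` under the geodesic flow of `D`. -/
noncomputable def geodesicFlowVec {H : Type*} [NormedAddCommGroup H] [InnerProductSpace ℂ H]
    [CompleteSpace H] (D : H →L[ℂ] H) (ψ₀ : H) (t : ℝ) : H :=
  NormedSpace.exp (Complex.I • (t : ℂ) • D) ψ₀

section Aux

open NormedSpace

variable {H : Type*} [NormedAddCommGroup H] [InnerProductSpace ℂ H] [CompleteSpace H]

local notation "⟪" x ", " y "⟫" => @inner ℂ _ _ x y

lemma geodesicFlowVec_eq_expR (D : H →L[ℂ] H) (ψ₀ : H) (t : ℝ) :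
    geodesicFlowVec D ψ₀ t = exp (t • (Complex.I • D)) ψ₀ := by
  have h1 : Complex.I • (t : ℂ) • D = t • (Complex.I • D) := by
    rw [smul_comm, Complex.coe_smul]
  rw [geodesicFlowVec, h1]

lemma hasDerivAt_geodesicFlowVec (D : H →L[ℂ] H) (ψ₀ : H) (t : ℝ) :
    HasDerivAt (fun s => geodesicFlowVec D ψ₀ s)
      ((Complex.I • D) (geodesicFlowVec D ψ₀ t)) t := by
  have hexp : HasDerivAt (fun u : ℝ => exp (u • (Complex.I • D)))
      ((Complex.I • D) * exp (t • (Complex.I • D))) t :=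
    hasDerivAt_exp_smul_const' (Complex.I • D) t
  have hL := ((ContinuousLinearMap.apply ℂ H ψ₀).restrictScalars ℝ).hasFDerivAt
    (x := exp (t • (Complex.I • D)))
  have h := hL.comp_hasDerivAt t hexp
  have heq : (⇑((ContinuousLinearMap.apply ℂ H ψ₀).restrictScalars ℝ)) ∘
      (fun u : ℝ => exp (u • (Complex.I • D))) = fun s => geodesicFlowVec D ψ₀ s := by
    funext s
    simp only [Function.comp, ContinuousLinearMap.coe_restrictScalars',
      ContinuousLinearMap.apply_apply]
    exact (geodesicFlowVec_eq_expR D ψ₀ s).symm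
  rw [heq] at h
  convert h using 1
  show (Complex.I • D) (geodesicFlowVec D ψ₀ t) =
    ((Complex.I • D) * exp (t • (Complex.I • D))) ψ₀
  rw [geodesicFlowVec_eq_expR]
  rfl

lemma geodesicFlowVec_norm (D : H →L[ℂ] H) (hD : IsSelfAdjoint D) (ψ₀ : H) (t : ℝ) :
    ‖geodesicFlowVec D ψ₀ t‖ = ‖ψ₀‖ := by
  set A : H →L[ℂ] H := Complex.I • (t : ℂ) • D with hA
  have hstar : star A = -A := by
    have : star ((t : ℂ) • D) = (t : ℂ) • D := by
      simp [star_smul, Complex.star_def, Complex.conj_ofReal, hD.star_eq]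
    rw [hA, star_smul, this, Complex.star_def, Complex.conj_I, neg_smul]
  have hUunit : star (exp A) * exp A = 1 := by
    rw [star_exp, hstar, ← exp_add_of_commute_of_mem_ball (𝕂 := ℂ) ((Commute.refl A).neg_left)
      ((expSeries_radius_eq_top ℂ (H →L[ℂ] H)).symm ▸ edist_lt_top _ _)
      ((expSeries_radius_eq_top ℂ (H →L[ℂ] H)).symm ▸ edist_lt_top _ _)]
    simp
  have hinner : ⟪geodesicFlowVec D ψ₀ t, geodesicFlowVec D ψ₀ t⟫ = ⟪ψ₀, ψ₀⟫ := by
    have h3 := ContinuousLinearMap.adjoint_inner_right (exp A) ψ₀ (exp A ψ₀)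
    rw [← ContinuousLinearMap.star_eq_adjoint] at h3
    have h2 : (star (exp A)) ((exp A) ψ₀) = ψ₀ := by
      have : (star (exp A) * exp A) ψ₀ = (1 : H →L[ℂ] H) ψ₀ := by rw [hUunit]
      simpa using this
    rw [h2] at h3
    simpa [geodesicFlowVec, hA] using h3.symm
  rw [@norm_eq_sqrt_re_inner ℂ, @norm_eq_sqrt_re_inner ℂ _ _ _ _ ψ₀, hinner]

lemma geodesicFlowVec_P_fixed (D P : H →L[ℂ] H) (hDP : D ∘L P = P ∘L D)
    (ψ₀ : H) (hψ₀mem : P ψ₀ = ψ₀) (t : ℝ) :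
    P (geodesicFlowVec D ψ₀ t) = geodesicFlowVec D ψ₀ t := by
  set A : H →L[ℂ] H := Complex.I • (t : ℂ) • D with hA
  have hcomm : Commute P A := by
    have h0 : Commute P D := by
      have : P * D = D * P := by
        simpa [ContinuousLinearMap.mul_def] using hDP.symm
      exact this
    simpa [hA] using (h0.smul_right ((t : ℂ))).smul_right Complex.I
  have hcomm' : Commute P (exp A) := hcomm.exp_right
  calc P (geodesicFlowVec D ψ₀ t) = (P * exp A) ψ₀ := rfl
    _ = (exp A * P) ψ₀ := by rw [hcomm'.eq]
    _ = exp A (P ψ₀) := rfl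
    _ = geodesicFlowVec D ψ₀ t := by rw [hψ₀mem]; rfl

lemma inner_comm_eq (D P a : H →L[ℂ] H) (hD : IsSelfAdjoint D) (hPsa : IsSelfAdjoint P)
    (hPidem : P ∘L P = P) (hDP : D ∘L P = P ∘L D) (ψ : H) (hψ : P ψ = ψ) :
    ⟪ψ, (D ∘L a - a ∘L D) ψ⟫ = ⟪ψ, ((P ∘L D ∘L P) ∘L a - a ∘L (P ∘L D ∘L P)) ψ⟫ := by
  have hDsym : ∀ x y : H, ⟪D x, y⟫ = ⟪x, D y⟫ := fun x y => by
    have h := ContinuousLinearMap.adjoint_inner_left D y x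
    rwa [ContinuousLinearMap.isSelfAdjoint_iff'.mp hD] at h
  have hPsym : ∀ x y : H, ⟪P x, y⟫ = ⟪x, P y⟫ := fun x y => by
    have h := ContinuousLinearMap.adjoint_inner_left P y x
    rwa [ContinuousLinearMap.isSelfAdjoint_iff'.mp hPsa] at h
  have hDψ : P (D ψ) = D ψ := by
    have h1 : P (D ψ) = (P ∘L D) ψ := rfl
    rw [h1, ← hDP]
    show D (P ψ) = D ψ
    rw [hψ]
  have hDPψ : (P ∘L D ∘L P) ψ = D ψ := by
    show P (D (P ψ)) = D ψ
    rw [hψ, hDψ]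
  have h1 : ⟪ψ, (P ∘L D ∘L P) (a ψ)⟫ = ⟪ψ, D (a ψ)⟫ := by
    have : ⟪ψ, (P ∘L D ∘L P) (a ψ)⟫ = ⟪(P ∘L D ∘L P) ψ, a ψ⟫ := by
      show ⟪ψ, P (D (P (a ψ)))⟫ = _
      rw [← hPsym, ← hDsym, ← hPsym]
      rfl
    rw [this, hDPψ, hDsym]
  have h2 : ⟪ψ, a ((P ∘L D ∘L P) ψ)⟫ = ⟪ψ, a (D ψ)⟫ := by rw [hDPψ]
  have e1 : ((P ∘L D ∘L P) ∘L a - a ∘L (P ∘L D ∘L P)) ψ =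
      (P ∘L D ∘L P) (a ψ) - a ((P ∘L D ∘L P) ψ) := rfl
  have e2 : (D ∘L a - a ∘L D) ψ = D (a ψ) - a (D ψ) := rfl
  rw [e1, e2, inner_sub_right, inner_sub_right, h1, h2]

end Aux

/-- Let `D` be self-adjoint, `P` a spectral projection of `D` (so `[D, P] = 0`),
`D_P := P D P`, and `ψ₀ ∈ PH` a unit vector. With `ψ_t := e^{itD}ψ₀` and
`Ψ_t(a) = ⟨ψ_t, a ψ_t⟩`, one has `|Ψ_{t₁}(a) - Ψ_{t₂}(a)| ≤ ‖[D_P, a]‖ · |t₁ - t₂|` for every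
bounded operator `a`; consequently the spectral distance associated to `D_P` between
`Ψ_{t₁}` and `Ψ_{t₂}` is at most `|t₁ - t₂|`. -/
theorem geodesic_flow_states_distance_bound
    {H : Type*} [NormedAddCommGroup H] [InnerProductSpace ℂ H] [CompleteSpace H]
    (D P : H →L[ℂ] H) (hD : IsSelfAdjoint D) (hPsa : IsSelfAdjoint P)
    (hPidem : P ∘L P = P) (hDP : D ∘L P = P ∘L D)
    (ψ₀ : H) (hψ₀ : ‖ψ₀‖ = 1) (hψ₀mem : P ψ₀ = ψ₀)
    (t₁ t₂ : ℝ) :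
    (∀ a : H →L[ℂ] H,
      ‖(inner ℂ (geodesicFlowVec D ψ₀ t₁) (a (geodesicFlowVec D ψ₀ t₁)) : ℂ) -
          (inner ℂ (geodesicFlowVec D ψ₀ t₂) (a (geodesicFlowVec D ψ₀ t₂)) : ℂ)‖ ≤
        ‖(P ∘L D ∘L P) ∘L a - a ∘L (P ∘L D ∘L P)‖ * |t₁ - t₂|) ∧
    sSup {r : ℝ | ∃ a : H →L[ℂ] H, IsSelfAdjoint a ∧
        ‖(P ∘L D ∘L P) ∘L a - a ∘L (P ∘L D ∘L P)‖ ≤ 1 ∧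
        r = Complex.re (inner ℂ (geodesicFlowVec D ψ₀ t₁) (a (geodesicFlowVec D ψ₀ t₁)) : ℂ) -
          Complex.re (inner ℂ (geodesicFlowVec D ψ₀ t₂) (a (geodesicFlowVec D ψ₀ t₂)) : ℂ)} ≤
      |t₁ - t₂| := by
  have key : ∀ a : H →L[ℂ] H,
      ‖(inner ℂ (geodesicFlowVec D ψ₀ t₁) (a (geodesicFlowVec D ψ₀ t₁)) : ℂ) -
          (inner ℂ (geodesicFlowVec D ψ₀ t₂) (a (geodesicFlowVec D ψ₀ t₂)) : ℂ)‖ ≤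
        ‖(P ∘L D ∘L P) ∘L a - a ∘L (P ∘L D ∘L P)‖ * |t₁ - t₂| := by
    intro a
    set ψ : ℝ → H := fun t => geodesicFlowVec D ψ₀ t with hψdef
    set C : H →L[ℂ] H := (P ∘L D ∘L P) ∘L a - a ∘L (P ∘L D ∘L P) with hC
    set f : ℝ → ℂ := fun t => (inner ℂ (ψ t) (a (ψ t)) : ℂ) with hf
    have hderiv : ∀ t : ℝ, HasDerivAt f (-Complex.I * (inner ℂ (ψ t) (C (ψ t)) : ℂ)) t := by
      intro t
      have hψ' : HasDerivAt ψ ((Complex.I • D) (ψ t)) t := hasDerivAt_geodesicFlowVec D ψ₀ t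
      have hg' : HasDerivAt (fun s => a (ψ s)) (a ((Complex.I • D) (ψ t))) t := by
        have hL := (a.restrictScalars ℝ).hasFDerivAt (x := ψ t)
        exact hL.comp_hasDerivAt t hψ'
      have hinner := (hψ'.inner ℂ hg')
      refine hinner.congr_deriv ?_
      have hDsym : ∀ x y : H, (inner ℂ (D x) y : ℂ) = inner ℂ x (D y) := fun x y => by
        have h := ContinuousLinearMap.adjoint_inner_left D y x
        rwa [ContinuousLinearMap.isSelfAdjoint_iff'.mp hD] at h
      have hcomm := inner_comm_eq D P a hD hPsa hPidem hDP (ψ t)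
        (geodesicFlowVec_P_fixed D P hDP ψ₀ hψ₀mem t)
      have hsplit : (inner ℂ (ψ t) (a ((Complex.I • D) (ψ t))) : ℂ) +
          inner ℂ ((Complex.I • D) (ψ t)) (a (ψ t))
          = -Complex.I * (inner ℂ (ψ t) ((D ∘L a - a ∘L D) (ψ t)) : ℂ) := by
        have e2 : (D ∘L a - a ∘L D) (ψ t) = D (a (ψ t)) - a (D (ψ t)) := rfl
        have e3 : (Complex.I • D) (ψ t) = Complex.I • D (ψ t) := rfl
        rw [e2, inner_sub_right, e3, map_smul, inner_smul_right, inner_smul_left,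
          Complex.conj_I, hDsym]
        ring
      rw [hC, ← hcomm, ← hsplit]
    have hbound : ∀ t ∈ Set.univ, ‖(-Complex.I * (inner ℂ (ψ t) (C (ψ t)) : ℂ))‖ ≤ ‖C‖ := by
      intro t _
      have hn : ‖ψ t‖ = 1 := by
        rw [hψdef]; rw [geodesicFlowVec_norm D hD ψ₀ t, hψ₀]
      calc ‖(-Complex.I * (inner ℂ (ψ t) (C (ψ t)) : ℂ))‖
          = ‖(inner ℂ (ψ t) (C (ψ t)) : ℂ)‖ := by
            rw [norm_mul]; simp
        _ ≤ ‖ψ t‖ * ‖C (ψ t)‖ := norm_inner_le_norm _ _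
        _ ≤ ‖ψ t‖ * (‖C‖ * ‖ψ t‖) := by
            apply mul_le_mul_of_nonneg_left (C.le_opNorm _) (norm_nonneg _)
        _ = ‖C‖ := by rw [hn]; ring
    have := Convex.norm_image_sub_le_of_norm_hasDerivWithin_le
      (fun t _ => (hderiv t).hasDerivWithinAt) hbound convex_univ
      (Set.mem_univ t₂) (Set.mem_univ t₁)
    calc ‖f t₁ - f t₂‖ = ‖f t₁ - f t₂‖ := rfl
      _ ≤ ‖C‖ * ‖t₁ - t₂‖ := this
      _ = ‖C‖ * |t₁ - t₂| := by rw [Real.norm_eq_abs]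
  refine ⟨key, ?_⟩
  apply Real.sSup_le
  · rintro r ⟨a, _, hnorm, hr⟩
    have h1 := key a
    have h2 : r ≤ ‖(inner ℂ (geodesicFlowVec D ψ₀ t₁) (a (geodesicFlowVec D ψ₀ t₁)) : ℂ) -
        (inner ℂ (geodesicFlowVec D ψ₀ t₂) (a (geodesicFlowVec D ψ₀ t₂)) : ℂ)‖ := by
      rw [hr]
      have := Complex.re_le_norm ((inner ℂ (geodesicFlowVec D ψ₀ t₁) (a (geodesicFlowVec D ψ₀ t₁)) : ℂ) -
        (inner ℂ (geodesicFlowVec D ψ₀ t₂) (a (geodesicFlowVec D ψ₀ t₂)) : ℂ))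
      simpa [Complex.sub_re] using this
    have h3 : ‖(P ∘L D ∘L P) ∘L a - a ∘L (P ∘L D ∘L P)‖ * |t₁ - t₂| ≤ 1 * |t₁ - t₂| :=
      mul_le_mul_of_nonneg_right hnorm (abs_nonneg _)
    linarith [h2.trans h1, h3]
  · exact abs_nonneg _
end
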